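/- arXiv:2008.08047 — 3 statements merged into one kernel-verified Lean document; each statement's English description precedes it below -/
import Mathlib

section
/- Let L be a linear subspace of the space of symmetric n×n real matrices, with orthogonal complement L^⊥ relative to the trace inner product ⟨A,B⟩ = tr(A·B). Let X and Y be symmetric positive definite n×n matrices and k > 0 with X − k·Y ∈ L and X⁻¹ − k·Y⁻¹ ∈ L^⊥, and let μ₁, …, μ_n be the eigenvalues (with multiplicity) of Y^(-1/2)·X·Y^(-1/2). Then Σ_{i=1}^n (log μ_i)² ≤ 2n·(cosh(log k) − 1). -/
open Matrix

open scoped ComplexOrder in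
/-- The positive semidefinite square root of a positive semidefinite matrix
(Mathlib's former `Matrix.PosSemidef.sqrt`, removed since; restored with its old definition). -/
noncomputable def Matrix.PosSemidef.sqrt {n 𝕜 : Type*} [Fintype n] [DecidableEq n] [RCLike 𝕜]
    {A : Matrix n n 𝕜} (hA : A.PosSemidef) : Matrix n n 𝕜 :=
  hA.1.eigenvectorUnitary.1 * diagonal ((↑) ∘ (√·) ∘ hA.1.eigenvalues) *
  (star hA.1.eigenvectorUnitary : Matrix n n 𝕜)

private lemma sqrt_posSemidef' {n : ℕ} {Y : Matrix (Fin n) (Fin n) ℝ} (hY : Y.PosSemidef) :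
    hY.sqrt.PosSemidef := by
  unfold Matrix.PosSemidef.sqrt
  have hD : (diagonal ((↑) ∘ (√·) ∘ hY.1.eigenvalues) : Matrix (Fin n) (Fin n) ℝ).PosSemidef :=
    PosSemidef.diagonal (fun i => by simp [Real.sqrt_nonneg])
  have := hD.mul_mul_conjTranspose_same (hY.1.eigenvectorUnitary : Matrix (Fin n) (Fin n) ℝ)
  simpa [star_eq_conjTranspose, Function.comp_def] using this

private lemma sqrt_mul_self' {n : ℕ} {Y : Matrix (Fin n) (Fin n) ℝ} (hY : Y.PosSemidef) :
    hY.sqrt * hY.sqrt = Y := by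
  unfold Matrix.PosSemidef.sqrt
  set U := hY.1.eigenvectorUnitary
  have hU : (star U : Matrix (Fin n) (Fin n) ℝ) * (U : Matrix (Fin n) (Fin n) ℝ) = 1 :=
    Unitary.coe_star_mul_self U
  have hD : (diagonal (RCLike.ofReal ∘ (√·) ∘ hY.1.eigenvalues) : Matrix (Fin n) (Fin n) ℝ) *
      diagonal (RCLike.ofReal ∘ (√·) ∘ hY.1.eigenvalues) = diagonal (RCLike.ofReal ∘ hY.1.eigenvalues) := by
    rw [diagonal_mul_diagonal]
    congr 1
    funext i
    simp [Real.mul_self_sqrt (hY.eigenvalues_nonneg i)]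
  calc _ = (U : Matrix (Fin n) (Fin n) ℝ) * ((diagonal (RCLike.ofReal ∘ (√·) ∘ hY.1.eigenvalues) *
        ((star U : Matrix (Fin n) (Fin n) ℝ) * (U : Matrix (Fin n) (Fin n) ℝ))) * diagonal (RCLike.ofReal ∘ (√·) ∘ hY.1.eigenvalues)) *
        (star U : Matrix (Fin n) (Fin n) ℝ) := by simp only [Matrix.mul_assoc]
    _ = Y := by
      rw [hU, Matrix.mul_one, hD]
      have h := hY.1.spectral_theorem
      simpa [Unitary.coe_star] using h.symm

private lemma two_mul_log_le {s : ℝ} (hs : 1 ≤ s) : 2 * Real.log s ≤ s - s⁻¹ := by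
  have hmono : MonotoneOn (fun t : ℝ => t - t⁻¹ - 2 * Real.log t) (Set.Ici 1) := by
    have hne : ∀ t : ℝ, t ∈ Set.Ici (1:ℝ) → t ≠ 0 := fun t ht =>
      (lt_of_lt_of_le one_pos ht).ne'
    apply monotoneOn_of_deriv_nonneg (convex_Ici 1)
    · refine ((continuousOn_id.sub (continuousOn_id.inv₀ hne)).sub ?_)
      exact (Real.continuousOn_log.mono (fun t ht => hne t ht)).const_smul 2 |>.congr
        (fun t ht => by simp [smul_eq_mul])
    · intro t ht
      rw [interior_Ici] at ht
      have ht0 : t ≠ 0 := (lt_trans one_pos ht).ne'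
      exact (((hasDerivAt_id t).sub (hasDerivAt_inv ht0)).sub
        ((Real.hasDerivAt_log ht0).const_mul 2)).differentiableAt.differentiableWithinAt
    · intro t ht
      rw [interior_Ici] at ht
      have ht0 : t ≠ 0 := (lt_trans one_pos ht).ne'
      have hd := (((hasDerivAt_id t).sub (hasDerivAt_inv ht0)).sub
        ((Real.hasDerivAt_log ht0).const_mul 2)).deriv
      rw [show (fun t : ℝ => t - t⁻¹ - 2 * Real.log t) =
        ((id - fun y => y⁻¹) - fun y => 2 * Real.log y) from rfl, hd]
      have : 1 - -(t ^ 2)⁻¹ - 2 * t⁻¹ = (1 - t⁻¹) ^ 2 := by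
        field_simp
        ring
      rw [this]
      positivity
  have h := hmono (Set.self_mem_Ici) (Set.mem_Ici.mpr hs) hs
  simp only [Real.log_one, inv_one] at h
  linarith

private lemma sq_log_le {t : ℝ} (ht : 0 < t) : (Real.log t) ^ 2 ≤ t + t⁻¹ - 2 := by
  have main : ∀ u : ℝ, 1 ≤ u → (Real.log u) ^ 2 ≤ u + u⁻¹ - 2 := by
    intro u hu
    have hu0 : (0:ℝ) < u := lt_of_lt_of_le one_pos hu
    set s := Real.sqrt u with hs
    have hs1 : 1 ≤ s := Real.one_le_sqrt.mpr hu
    have hs0 : s ≠ 0 := (lt_of_lt_of_le one_pos hs1).ne'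
    have hss : s * s = u := Real.mul_self_sqrt hu0.le
    have hlogu : Real.log u = 2 * Real.log s := by
      rw [← hss, Real.log_mul hs0 hs0]; ring
    have h2 : Real.log u ≤ s - s⁻¹ := hlogu ▸ two_mul_log_le hs1
    have hlog0 : 0 ≤ Real.log u := Real.log_nonneg hu
    calc (Real.log u) ^ 2 ≤ (s - s⁻¹) ^ 2 := pow_le_pow_left₀ hlog0 h2 2
      _ = u + u⁻¹ - 2 := by rw [← hss]; field_simp; ring
  rcases le_or_gt 1 t with h | h
  · exact main t h
  · have h1 : 1 ≤ t⁻¹ := one_le_inv_iff₀.mpr ⟨ht, h.le⟩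
    have := main t⁻¹ h1
    rwa [Real.log_inv, neg_pow, inv_inv, add_comm, neg_one_sq, one_mul] at this

private lemma posDef_of_posSemidef_isUnit {n : ℕ} {M : Matrix (Fin n) (Fin n) ℝ}
    (hM : M.PosSemidef) (h : IsUnit M) : M.PosDef := by
  exact hM.posDef_iff_isUnit.mpr h

/-- μ-update lemma (semidefinite instance): if `L` is a subspace of symmetric
matrices with orthogonal complement `Lp` (for the trace inner product), `X, Y`
are symmetric positive definite, `k > 0`, `X - k•Y ∈ L`, `X⁻¹ - k•Y⁻¹ ∈ Lp`,
and `μᵢ` are the eigenvalues of `Y^(-1/2) * X * Y^(-1/2)`, then the squared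
geodesic distance satisfies `∑ i, (log μᵢ)² ≤ 2 n (cosh (log k) - 1)`. -/
theorem geodesic_distance_sq_le_central_path_bound
    (n : ℕ) (hn : 1 ≤ n)
    (L : Submodule ℝ (Matrix (Fin n) (Fin n) ℝ))
    (hL : ∀ A ∈ L, A.IsHermitian)
    (Lp : Submodule ℝ (Matrix (Fin n) (Fin n) ℝ))
    (hLp : ∀ B, B ∈ Lp ↔ (B.IsHermitian ∧ ∀ A ∈ L, (A * B).trace = 0))
    (X Y : Matrix (Fin n) (Fin n) ℝ) (hX : X.PosDef) (hY : Y.PosDef)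
    (k : ℝ) (hk : 0 < k)
    (hmemL : X - k • Y ∈ L) (hmemLp : X⁻¹ - k • Y⁻¹ ∈ Lp)
    (hA : ((hY.posSemidef.sqrt)⁻¹ * X * (hY.posSemidef.sqrt)⁻¹).IsHermitian) :
    ∑ i, (Real.log (hA.eigenvalues i)) ^ 2 ≤
      2 * n * (Real.cosh (Real.log k) - 1) := by
  classical
  set S := hY.posSemidef.sqrt with hSdef
  have hSps : S.PosSemidef := sqrt_posSemidef' hY.posSemidef
  have hSS : S * S = Y := sqrt_mul_self' hY.posSemidef
  have hYdet : IsUnit Y.det := hY.det_pos.ne'.isUnit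
  have hXdet : IsUnit X.det := hX.det_pos.ne'.isUnit
  have hSdet : IsUnit S.det := by
    have hd : S.det * S.det = Y.det := by rw [← det_mul, hSS]
    have : S.det ≠ 0 := fun h => by simp [h] at hd; exact hYdet.ne_zero hd.symm
    exact this.isUnit
  have hSiH : (S⁻¹)ᴴ = S⁻¹ := (hSps.inv).1
  set A := S⁻¹ * X * S⁻¹ with hAdef
  have hAps : A.PosSemidef := by
    have := hX.posSemidef.mul_mul_conjTranspose_same S⁻¹
    rwa [hSiH] at this
  have hAunit : IsUnit A := by
    have hSi : IsUnit (S⁻¹) := Matrix.isUnit_nonsing_inv_iff.mpr ((isUnit_iff_isUnit_det _).2 hSdet)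
    exact (hSi.mul ((isUnit_iff_isUnit_det _).2 hXdet)).mul hSi
  have hApd : A.PosDef := posDef_of_posSemidef_isUnit hAps hAunit
  set μ := hA.eigenvalues with hμ
  have hmu : ∀ i, 0 < μ i := fun i => hApd.eigenvalues_pos i
  set U : Matrix (Fin n) (Fin n) ℝ := (hA.eigenvectorUnitary : Matrix (Fin n) (Fin n) ℝ) with hU
  have hU1 : U * star U = 1 := Matrix.mem_unitaryGroup_iff.mp (hA.eigenvectorUnitary).2
  have hU2 : star U * U = 1 := Matrix.mem_unitaryGroup_iff'.mp (hA.eigenvectorUnitary).2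
  have hspec : A = U * diagonal μ * star U := by
    have := hA.spectral_theorem
    simpa using this
  have htrA : A.trace = ∑ i, μ i := by
    rw [hspec, trace_mul_cycle, hU2, Matrix.one_mul, trace_diagonal]
  have hAinvspec : A⁻¹ = U * diagonal (fun i => (μ i)⁻¹) * star U := by
    apply inv_eq_right_inv
    rw [hspec]
    have e1 : (U * diagonal μ * star U) * (U * diagonal (fun i => (μ i)⁻¹) * star U)
        = U * (diagonal μ * ((star U * U) * (diagonal (fun i => (μ i)⁻¹) * star U))) := by
      simp only [Matrix.mul_assoc]
    rw [e1, hU2, Matrix.one_mul, ← Matrix.mul_assoc (diagonal μ), diagonal_mul_diagonal]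
    have hd : (diagonal fun i => μ i * (μ i)⁻¹) = (1 : Matrix (Fin n) (Fin n) ℝ) := by
      have : (fun i => μ i * (μ i)⁻¹) = fun _ : Fin n => (1:ℝ) :=
        funext fun i => mul_inv_cancel₀ (hmu i).ne'
      rw [this]
      exact diagonal_one
    rw [hd, Matrix.one_mul]
    exact hU1
  have htrAinv : A⁻¹.trace = ∑ i, (μ i)⁻¹ := by
    rw [hAinvspec, trace_mul_cycle, hU2, Matrix.one_mul, trace_diagonal]
  have hAinv2 : A⁻¹ = S * X⁻¹ * S := by
    apply inv_eq_right_inv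
    show (S⁻¹ * X * S⁻¹) * (S * X⁻¹ * S) = 1
    have e1 : (S⁻¹ * X * S⁻¹) * (S * X⁻¹ * S) = S⁻¹ * (X * (S⁻¹ * (S * (X⁻¹ * S)))) := by
      simp only [Matrix.mul_assoc]
    rw [e1, Matrix.nonsing_inv_mul_cancel_left _ _ hSdet,
      Matrix.mul_nonsing_inv_cancel_left _ _ hXdet, Matrix.nonsing_inv_mul _ hSdet]
  have htr1 : A.trace = (X * Y⁻¹).trace := by
    rw [hAdef, trace_mul_cycle, ← Matrix.mul_inv_rev, hSS, trace_mul_comm]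
  have htr2 : A⁻¹.trace = (Y * X⁻¹).trace := by
    rw [hAinv2, trace_mul_cycle, hSS]
  -- orthogonality identity
  have horth : ((X - k • Y) * (X⁻¹ - k • Y⁻¹)).trace = 0 := ((hLp _).mp hmemLp).2 _ hmemL
  have hexp : ((X - k • Y) * (X⁻¹ - k • Y⁻¹)).trace
      = (n:ℝ) - k * (X * Y⁻¹).trace - k * (Y * X⁻¹).trace + k * k * n := by
    have h1 : X * X⁻¹ = 1 := Matrix.mul_nonsing_inv _ hXdet
    have h2 : Y * Y⁻¹ = 1 := Matrix.mul_nonsing_inv _ hYdet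
    simp only [sub_mul, smul_mul_assoc, mul_sub, mul_smul_comm, h1, h2, trace_sub, trace_smul,
      trace_one, smul_eq_mul, smul_smul, Fintype.card_fin]
    ring
  have hk0 : k ≠ 0 := hk.ne'
  have hkey : (X * Y⁻¹).trace + (Y * X⁻¹).trace = n * (k + k⁻¹) := by
    have h := horth
    rw [hexp] at h
    apply mul_left_cancel₀ hk0
    have : k * ((n:ℝ) * (k + k⁻¹)) = n + k * k * n := by
      field_simp
      ring
    rw [this]
    linarith
  have hsum : (∑ i, μ i) + (∑ i, (μ i)⁻¹) = n * (k + k⁻¹) := by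
    rw [← htrA, ← htrAinv, htr1, htr2, hkey]
  calc ∑ i, (Real.log (μ i)) ^ 2
      ≤ ∑ i, (μ i + (μ i)⁻¹ - 2) := Finset.sum_le_sum fun i _ => sq_log_le (hmu i)
    _ = (∑ i, μ i) + (∑ i, (μ i)⁻¹) - 2 * n := by
        rw [Finset.sum_sub_distrib, Finset.sum_add_distrib]
        simp [Finset.sum_const, Finset.card_univ, mul_comm]
    _ = n * (k + k⁻¹) - 2 * n := by rw [hsum]
    _ = 2 * n * (Real.cosh (Real.log k) - 1) := by
        rw [Real.cosh_log hk]
        ring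
end

section
/- Fix a linear subspace L of the space of symmetric n×n real matrices, symmetric matrices X₀, S₀, and μ > 0, and let L^⊥ denote the orthogonal complement of L with respect to the trace inner product ⟨A,B⟩ = tr(A·B). Let W be symmetric positive definite, T an invertible n×n real matrix, and P := (T·W·Tᵀ)^(-1/2)·T·W^(1/2). Suppose the symmetric matrix D satisfies W^(1/2)·(I + D)·W^(1/2) ∈ (1/√μ)·X₀ + L and W^(-1/2)·(I − D)·W^(-1/2) ∈ (1/√μ)·S₀ + L^⊥. Then the symmetric matrix P·D·Pᵀ satisfies (TWTᵀ)^(1/2)·(I + P·D·Pᵀ)·(TWTᵀ)^(1/2) ∈ (1/√μ)·T·X₀·Tᵀ + T·L·Tᵀ and (TWTᵀ)^(-1/2)·(I − P·D·Pᵀ)·(TWTᵀ)^(-1/2) ∈ (1/√μ)·(Tᵀ)⁻¹·S₀·T⁻¹ + ((Tᵀ)⁻¹·Z·T⁻¹ : Z ∈ L^⊥), where T·L·Tᵀ := {T·Z·Tᵀ : Z ∈ L}. -/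
open Matrix

open scoped ComplexOrder in
theorem Matrix.PosSemidef.posSemidef_sqrt {n 𝕜 : Type*} [Fintype n] [DecidableEq n] [RCLike 𝕜]
    {A : Matrix n n 𝕜} (hA : A.PosSemidef) : hA.sqrt.PosSemidef := by
  unfold Matrix.PosSemidef.sqrt
  have hd : (diagonal ((↑) ∘ (√·) ∘ hA.1.eigenvalues) : Matrix n n 𝕜).PosSemidef :=
    posSemidef_diagonal_iff.mpr fun i => by simp [Real.sqrt_nonneg]
  have := hd.mul_mul_conjTranspose_same (hA.1.eigenvectorUnitary : Matrix n n 𝕜)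
  simpa [Matrix.star_eq_conjTranspose] using this

open scoped ComplexOrder in
theorem Matrix.PosSemidef.sqrt_mul_self {n 𝕜 : Type*} [Fintype n] [DecidableEq n] [RCLike 𝕜]
    {A : Matrix n n 𝕜} (hA : A.PosSemidef) : hA.sqrt * hA.sqrt = A := by
  unfold Matrix.PosSemidef.sqrt
  conv_rhs => rw [hA.1.spectral_theorem]
  rw [Unitary.conjStarAlgAut_apply]
  have hu : (star hA.1.eigenvectorUnitary : Matrix n n 𝕜) * hA.1.eigenvectorUnitary.1 = 1 :=
    Unitary.coe_star_mul_self _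
  have hdd : (diagonal ((↑) ∘ (√·) ∘ hA.1.eigenvalues) : Matrix n n 𝕜) *
      diagonal ((↑) ∘ (√·) ∘ hA.1.eigenvalues) = diagonal (RCLike.ofReal ∘ hA.1.eigenvalues) := by
    rw [diagonal_mul_diagonal]
    congr 1
    funext i
    simp only [Function.comp_apply]
    rw [← RCLike.ofReal_mul, Real.mul_self_sqrt (hA.eigenvalues_nonneg i)]
  calc _ = (hA.1.eigenvectorUnitary.1 * ((diagonal ((↑) ∘ (√·) ∘ hA.1.eigenvalues)) *
        ((star hA.1.eigenvectorUnitary : Matrix n n 𝕜) * hA.1.eigenvectorUnitary.1) *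
        diagonal ((↑) ∘ (√·) ∘ hA.1.eigenvalues))) *
        (star hA.1.eigenvectorUnitary : Matrix n n 𝕜) := by simp only [Matrix.mul_assoc]
    _ = _ := by rw [hu, Matrix.mul_one, hdd]

/-- Equivariance of the Newton direction under cone automorphisms
(semidefinite instance): if `D` is the Newton direction at `(W, μ)` for data
`(L, X₀, S₀)` and `P = (T W Tᵀ)^(-1/2) T W^(1/2)`, then `P D Pᵀ` is the Newton
direction at `(T W Tᵀ, μ)` for the transformed data
`(T L Tᵀ, T X₀ Tᵀ, (Tᵀ)⁻¹ S₀ T⁻¹)`. -/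
theorem newton_direction_scale_invariance
    (n : ℕ) (hn : 1 ≤ n)
    (L : Submodule ℝ (Matrix (Fin n) (Fin n) ℝ))
    (hL : ∀ A ∈ L, A.IsHermitian)
    (Lp : Submodule ℝ (Matrix (Fin n) (Fin n) ℝ))
    (hLp : ∀ B, B ∈ Lp ↔ (B.IsHermitian ∧ ∀ A ∈ L, (A * B).trace = 0))
    (X₀ S₀ : Matrix (Fin n) (Fin n) ℝ) (hX₀ : X₀.IsHermitian) (hS₀ : S₀.IsHermitian)
    (μ : ℝ) (hμ : 0 < μ)
    (W T : Matrix (Fin n) (Fin n) ℝ) (hW : W.PosDef) (hT : IsUnit T.det)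
    (hTWT : (T * W * Tᵀ).PosDef)
    (P : Matrix (Fin n) (Fin n) ℝ)
    (hP : P = (hTWT.posSemidef.sqrt)⁻¹ * T * hW.posSemidef.sqrt)
    (D : Matrix (Fin n) (Fin n) ℝ) (hD : D.IsHermitian)
    (hD1 : hW.posSemidef.sqrt * (1 + D) * hW.posSemidef.sqrt
            - (1 / Real.sqrt μ) • X₀ ∈ L)
    (hD2 : (hW.posSemidef.sqrt)⁻¹ * (1 - D) * (hW.posSemidef.sqrt)⁻¹
            - (1 / Real.sqrt μ) • S₀ ∈ Lp) :
    (∃ Z ∈ L,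
      hTWT.posSemidef.sqrt * (1 + P * D * Pᵀ) * hTWT.posSemidef.sqrt =
        (1 / Real.sqrt μ) • (T * X₀ * Tᵀ) + T * Z * Tᵀ) ∧
    (∃ Z ∈ Lp,
      (hTWT.posSemidef.sqrt)⁻¹ * (1 - P * D * Pᵀ) * (hTWT.posSemidef.sqrt)⁻¹ =
        (1 / Real.sqrt μ) • ((Tᵀ)⁻¹ * S₀ * T⁻¹) + (Tᵀ)⁻¹ * Z * T⁻¹) := by
  classical
  set V := hW.posSemidef.sqrt with hV
  set U := hTWT.posSemidef.sqrt with hU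
  have hVh : Vᵀ = V := hW.posSemidef.posSemidef_sqrt.isHermitian
  have hUh : Uᵀ = U := hTWT.posSemidef.posSemidef_sqrt.isHermitian
  have hVV : V * V = W := hW.posSemidef.sqrt_mul_self
  have hUU : U * U = T * W * Tᵀ := hTWT.posSemidef.sqrt_mul_self
  have hWu : IsUnit W.det := hW.isUnit.map (Matrix.detMonoidHom)
  have hVu : IsUnit V.det := by
    have : V.det * V.det = W.det := by rw [← Matrix.det_mul, hVV]
    exact isUnit_of_mul_isUnit_left (this ▸ hWu)
  have hTWTu : IsUnit (T * W * Tᵀ).det := hTWT.isUnit.map (Matrix.detMonoidHom)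
  have hUu : IsUnit U.det := by
    have : U.det * U.det = (T * W * Tᵀ).det := by rw [← Matrix.det_mul, hUU]
    exact isUnit_of_mul_isUnit_left (this ▸ hTWTu)
  have hTt : IsUnit Tᵀ.det := by rwa [Matrix.det_transpose]
  have hUinv : U * U⁻¹ = 1 := Matrix.mul_nonsing_inv _ hUu
  have hUinv' : U⁻¹ * U = 1 := Matrix.nonsing_inv_mul _ hUu
  have hVinv : V * V⁻¹ = 1 := Matrix.mul_nonsing_inv _ hVu
  have hVinv' : V⁻¹ * V = 1 := Matrix.nonsing_inv_mul _ hVu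
  have hTinv : T * T⁻¹ = 1 := Matrix.mul_nonsing_inv _ hT
  have hTinv' : T⁻¹ * T = 1 := Matrix.nonsing_inv_mul _ hT
  have hTtinv : Tᵀ * (Tᵀ)⁻¹ = 1 := Matrix.mul_nonsing_inv _ hTt
  have hTtinv' : (Tᵀ)⁻¹ * Tᵀ = 1 := Matrix.nonsing_inv_mul _ hTt
  -- key identities
  have hUP : U * P = T * V := by
    rw [hP, ← Matrix.mul_assoc, ← Matrix.mul_assoc, hUinv, Matrix.one_mul]
  have hPU : Pᵀ * U = V * Tᵀ := by
    have := congrArg Matrix.transpose hUP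
    rwa [Matrix.transpose_mul, Matrix.transpose_mul, hUh, hVh] at this
  have hWinv : W⁻¹ = V⁻¹ * V⁻¹ := by rw [← hVV, Matrix.mul_inv_rev]
  have hUUinv : U⁻¹ * U⁻¹ = (Tᵀ)⁻¹ * W⁻¹ * T⁻¹ := by
    rw [← Matrix.mul_inv_rev, hUU, Matrix.mul_inv_rev, Matrix.mul_inv_rev,
      Matrix.mul_assoc]
  have hUiP : U⁻¹ * P = (Tᵀ)⁻¹ * V⁻¹ := by
    rw [hP, ← Matrix.mul_assoc, ← Matrix.mul_assoc, hUUinv, hWinv]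
    calc (Tᵀ)⁻¹ * (V⁻¹ * V⁻¹) * T⁻¹ * T * V
        = (Tᵀ)⁻¹ * (V⁻¹ * (V⁻¹ * ((T⁻¹ * T) * V))) := by
          simp only [Matrix.mul_assoc]
      _ = (Tᵀ)⁻¹ * V⁻¹ := by rw [hTinv', Matrix.one_mul, hVinv', Matrix.mul_one]
  have hPUi : Pᵀ * U⁻¹ = V⁻¹ * T⁻¹ := by
    have := congrArg Matrix.transpose hUiP
    rwa [Matrix.transpose_mul, Matrix.transpose_mul, Matrix.transpose_nonsing_inv,
      Matrix.transpose_nonsing_inv, Matrix.transpose_nonsing_inv, hUh, hVh,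
      Matrix.transpose_transpose] at this
  constructor
  · refine ⟨V * (1 + D) * V - (1 / Real.sqrt μ) • X₀, hD1, ?_⟩
    have expand : U * (1 + P * D * Pᵀ) * U = U * U + (U * P) * D * (Pᵀ * U) := by
      noncomm_ring
    rw [expand, hUP, hPU, hUU]
    have : T * (V * (1 + D) * V - (1 / Real.sqrt μ) • X₀) * Tᵀ
        = T * (V * (1 + D) * V) * Tᵀ - (1 / Real.sqrt μ) • (T * X₀ * Tᵀ) := by
      rw [Matrix.mul_sub, Matrix.sub_mul, Matrix.mul_smul, Matrix.smul_mul]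
    rw [this]
    have : T * (V * (1 + D) * V) * Tᵀ = T * W * Tᵀ + T * V * D * (V * Tᵀ) := by
      rw [← hVV]; noncomm_ring
    rw [this]
    abel
  · refine ⟨V⁻¹ * (1 - D) * V⁻¹ - (1 / Real.sqrt μ) • S₀, hD2, ?_⟩
    have expand : U⁻¹ * (1 - P * D * Pᵀ) * U⁻¹
        = U⁻¹ * U⁻¹ - (U⁻¹ * P) * D * (Pᵀ * U⁻¹) := by
      noncomm_ring
    rw [expand, hUiP, hPUi, hUUinv, hWinv]
    have : (Tᵀ)⁻¹ * (V⁻¹ * (1 - D) * V⁻¹ - (1 / Real.sqrt μ) • S₀) * T⁻¹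
        = (Tᵀ)⁻¹ * (V⁻¹ * (1 - D) * V⁻¹) * T⁻¹
          - (1 / Real.sqrt μ) • ((Tᵀ)⁻¹ * S₀ * T⁻¹) := by
      rw [Matrix.mul_sub, Matrix.sub_mul, Matrix.mul_smul, Matrix.smul_mul]
    rw [this]
    have : (Tᵀ)⁻¹ * (V⁻¹ * (1 - D) * V⁻¹) * T⁻¹
        = (Tᵀ)⁻¹ * (V⁻¹ * V⁻¹) * T⁻¹ - (Tᵀ)⁻¹ * V⁻¹ * D * (V⁻¹ * T⁻¹) := by
      noncomm_ring
    rw [this]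
    abel
end

section
/- Fix a linear subspace L of the space of symmetric n×n real matrices with orthogonal complement L^⊥ relative to the trace inner product ⟨A,B⟩ = tr(A·B), symmetric matrices X₀, S₀, and μ > 0. Let W and Ŵ be symmetric positive definite with Ŵ ∈ (1/√μ)·X₀ + L and Ŵ⁻¹ ∈ (1/√μ)·S₀ + L^⊥, and let D be symmetric with W^(1/2)·(I + D)·W^(1/2) ∈ (1/√μ)·X₀ + L and W^(-1/2)·(I − D)·W^(-1/2) ∈ (1/√μ)·S₀ + L^⊥. Define f : ℝ → ℝ by f(t) = tr(exp(t·D)·W^(1/2)·Ŵ⁻¹·W^(1/2)) + tr(exp(−t·D)·W^(-1/2)·Ŵ·W^(-1/2)) − 2n. Then f′(0) = −( f(0) + tr(D²) ). -/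
open Matrix

section Aux

variable {n : ℕ}

private lemma trace_hasDerivAt (D P : Matrix (Fin n) (Fin n) ℝ) :
    HasDerivAt (fun t : ℝ => (NormedSpace.exp (t • D) * P).trace) ((D * P).trace) 0 := by
  letI : SeminormedRing (Matrix (Fin n) (Fin n) ℝ) := Matrix.linftyOpSemiNormedRing
  letI : NormedRing (Matrix (Fin n) (Fin n) ℝ) := Matrix.linftyOpNormedRing
  letI : NormedAlgebra ℝ (Matrix (Fin n) (Fin n) ℝ) := Matrix.linftyOpNormedAlgebra
  letI : CompleteSpace (Matrix (Fin n) (Fin n) ℝ) := FiniteDimensional.complete ℝ _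
  have h1 : HasDerivAt (fun u : ℝ => NormedSpace.exp (u • D))
      (NormedSpace.exp ((0 : ℝ) • D) * D) 0 := hasDerivAt_exp_smul_const D 0
  have h2 := h1.mul_const P
  have hT := (LinearMap.toContinuousLinearMap
      (Matrix.traceLinearMap (Fin n) ℝ ℝ)).hasFDerivAt (x := NormedSpace.exp ((0:ℝ) • D) * P)
  have h3 := hT.comp_hasDerivAt 0 h2
  simp only [zero_smul, NormedSpace.exp_zero, Matrix.one_mul] at h3
  exact h3

end Aux

/-- Derivative of the divergence along the Newton direction: if `Wc` is the
scaled centered point for `μ` and `D` the Newton direction at `(W, μ)`, then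
the divergence `f t` along the geodesic through `W` with direction `D`
satisfies `f'(0) = -(f(0) + tr (D²))`. -/
theorem deriv_divergence_newton_direction
    (n : ℕ) (hn : 1 ≤ n)
    (L : Submodule ℝ (Matrix (Fin n) (Fin n) ℝ))
    (hL : ∀ A ∈ L, A.IsHermitian)
    (Lp : Submodule ℝ (Matrix (Fin n) (Fin n) ℝ))
    (hLp : ∀ B, B ∈ Lp ↔ (B.IsHermitian ∧ ∀ A ∈ L, (A * B).trace = 0))
    (X₀ S₀ : Matrix (Fin n) (Fin n) ℝ) (hX₀ : X₀.IsHermitian) (hS₀ : S₀.IsHermitian)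
    (μ : ℝ) (hμ : 0 < μ)
    (W Wc : Matrix (Fin n) (Fin n) ℝ) (hW : W.PosDef) (hWc : Wc.PosDef)
    (hWc1 : Wc - (1 / Real.sqrt μ) • X₀ ∈ L)
    (hWc2 : Wc⁻¹ - (1 / Real.sqrt μ) • S₀ ∈ Lp)
    (D : Matrix (Fin n) (Fin n) ℝ) (hD : D.IsHermitian)
    (hD1 : hW.posSemidef.sqrt * (1 + D) * hW.posSemidef.sqrt
            - (1 / Real.sqrt μ) • X₀ ∈ L)
    (hD2 : (hW.posSemidef.sqrt)⁻¹ * (1 - D) * (hW.posSemidef.sqrt)⁻¹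
            - (1 / Real.sqrt μ) • S₀ ∈ Lp)
    (f : ℝ → ℝ)
    (hf : ∀ t : ℝ, f t =
      (NormedSpace.exp (t • D) * (hW.posSemidef.sqrt * Wc⁻¹ * hW.posSemidef.sqrt)).trace +
        (NormedSpace.exp ((-t) • D) *
          ((hW.posSemidef.sqrt)⁻¹ * Wc * (hW.posSemidef.sqrt)⁻¹)).trace - 2 * n) :
    deriv f 0 = -(f 0 + (D * D).trace) := by
  classical
  set S := hW.posSemidef.sqrt with hSdef
  -- S is invertible
  have hdetS : IsUnit S.det := by
    have hSS : S * S = W := by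
      have hspec := hW.posSemidef.1.spectral_theorem
      have hU : (star hW.posSemidef.1.eigenvectorUnitary : Matrix (Fin n) (Fin n) ℝ) * hW.posSemidef.1.eigenvectorUnitary.1 = 1 :=
        Unitary.coe_star_mul_self _
      have hev := hW.posSemidef.eigenvalues_nonneg
      rw [Unitary.conjStarAlgAut_apply] at hspec
      conv_rhs => rw [hspec]
      simp only [hSdef, Matrix.PosSemidef.sqrt, Matrix.mul_assoc]
      rw [← Matrix.mul_assoc (star _ : Matrix _ _ ℝ), hU, Matrix.one_mul, ← Matrix.mul_assoc (diagonal _), diagonal_mul_diagonal]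
      congr 3
      funext i
      simp [Real.mul_self_sqrt (hev i)]
    have : S.det * S.det = W.det := by rw [← Matrix.det_mul, hSS]
    have hWdet : W.det ≠ 0 := hW.det_pos.ne'
    exact isUnit_iff_ne_zero.mpr (fun h => hWdet (by rw [← this, h, zero_mul]))
  have hS1 : S * S⁻¹ = 1 := Matrix.mul_nonsing_inv S hdetS
  have hS2 : S⁻¹ * S = 1 := Matrix.nonsing_inv_mul S hdetS
  have hc1 : ∀ X : Matrix (Fin n) (Fin n) ℝ, S * (S⁻¹ * X) = X := fun X => by
    rw [← Matrix.mul_assoc, hS1, Matrix.one_mul]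
  have hc2 : ∀ X : Matrix (Fin n) (Fin n) ℝ, S⁻¹ * (S * X) = X := fun X => by
    rw [← Matrix.mul_assoc, hS2, Matrix.one_mul]
  set P := S * Wc⁻¹ * S with hPdef
  set Q := S⁻¹ * Wc * S⁻¹ with hQdef
  -- the orthogonality relation
  have hA : S * (1 + D) * S - Wc ∈ L := by
    have := L.sub_mem hD1 hWc1
    simpa [sub_sub_sub_cancel_right] using this
  have hB : S⁻¹ * (1 - D) * S⁻¹ - Wc⁻¹ ∈ Lp := by
    have := Lp.sub_mem hD2 hWc2
    simpa [sub_sub_sub_cancel_right] using this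
  have horth : (((S * (1 + D) * S - Wc)) * (S⁻¹ * (1 - D) * S⁻¹ - Wc⁻¹)).trace = 0 :=
    ((hLp _).mp hB).2 _ hA
  -- expand the orthogonality relation
  have hWcinv : Wc * Wc⁻¹ = 1 := Matrix.mul_nonsing_inv Wc hWc.det_pos.ne'.isUnit
  have t1 : ((S * (1 + D) * S) * (S⁻¹ * (1 - D) * S⁻¹)).trace = (n : ℝ) - (D * D).trace := by
    have e1 : (S * (1 + D) * S) * (S⁻¹ * (1 - D) * S⁻¹)
        = S * ((1 + D) * ((1 - D) * S⁻¹)) := by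
      simp only [Matrix.mul_assoc, hc1]
    rw [e1, Matrix.trace_mul_comm]
    have e2 : ((1 + D) * ((1 - D) * S⁻¹)) * S = (1 + D) * (1 - D) := by
      simp only [Matrix.mul_assoc, hS2, Matrix.mul_one]
    rw [e2]
    have e3 : (1 + D) * (1 - D) = 1 - D * D := by noncomm_ring
    rw [e3, Matrix.trace_sub, Matrix.trace_one]
    simp
  have t2 : ((S * (1 + D) * S) * Wc⁻¹).trace = P.trace + (D * P).trace := by
    have e1 : (S * (1 + D) * S) * Wc⁻¹ = S * ((1 + D) * (S * Wc⁻¹)) := by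
      simp only [Matrix.mul_assoc]
    rw [e1, Matrix.trace_mul_comm]
    have e2 : ((1 + D) * (S * Wc⁻¹)) * S = P + D * P := by
      rw [hPdef]; noncomm_ring
    rw [e2, Matrix.trace_add]
  have t3 : (Wc * (S⁻¹ * (1 - D) * S⁻¹)).trace = Q.trace - (D * Q).trace := by
    rw [Matrix.trace_mul_comm]
    have e1 : (S⁻¹ * (1 - D) * S⁻¹) * Wc = S⁻¹ * ((1 - D) * (S⁻¹ * Wc)) := by
      simp only [Matrix.mul_assoc]
    rw [e1, Matrix.trace_mul_comm]
    have e2 : ((1 - D) * (S⁻¹ * Wc)) * S⁻¹ = Q - D * Q := by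
      rw [hQdef]; noncomm_ring
    rw [e2, Matrix.trace_sub]
  have t4 : (Wc * Wc⁻¹).trace = (n : ℝ) := by rw [hWcinv, Matrix.trace_one]; simp
  have hexpand : ((S * (1 + D) * S) * (S⁻¹ * (1 - D) * S⁻¹)).trace
      - ((S * (1 + D) * S) * Wc⁻¹).trace - (Wc * (S⁻¹ * (1 - D) * S⁻¹)).trace
      + (Wc * Wc⁻¹).trace = 0 := by
    have : ((S * (1 + D) * S - Wc)) * (S⁻¹ * (1 - D) * S⁻¹ - Wc⁻¹)
        = (S * (1 + D) * S) * (S⁻¹ * (1 - D) * S⁻¹) - (S * (1 + D) * S) * Wc⁻¹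
          - Wc * (S⁻¹ * (1 - D) * S⁻¹) + Wc * Wc⁻¹ := by noncomm_ring
    rw [this] at horth
    simpa [Matrix.trace_add, Matrix.trace_sub] using horth
  -- derivative computation
  have hg : HasDerivAt (fun t : ℝ => (NormedSpace.exp (t • D) * P).trace) ((D * P).trace) 0 :=
    trace_hasDerivAt D P
  have hq : HasDerivAt (fun t : ℝ => (NormedSpace.exp ((-t) • D) * Q).trace)
      (-((D * Q).trace)) 0 := by
    have h0 : HasDerivAt (fun t : ℝ => -t) (-1 : ℝ) 0 := (hasDerivAt_id 0).neg
    have htr : HasDerivAt (fun t : ℝ => (NormedSpace.exp (t • D) * Q).trace)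
        ((D * Q).trace) (-0 : ℝ) := by rw [neg_zero]; exact trace_hasDerivAt D Q
    have := htr.comp 0 h0
    simpa [Function.comp_def, neg_smul, mul_neg_one] using this
  have hfd : HasDerivAt f ((D * P).trace - (D * Q).trace) 0 := by
    have hfun : f = fun t : ℝ =>
        (NormedSpace.exp (t • D) * P).trace + (NormedSpace.exp ((-t) • D) * Q).trace
          - 2 * n := funext hf
    rw [hfun]
    simpa [sub_eq_add_neg] using (hg.add hq).sub_const (2 * (n : ℝ))
  have hf0 : f 0 = P.trace + Q.trace - 2 * n := by
    simpa [NormedSpace.exp_zero] using hf 0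
  rw [hfd.deriv, hf0]
  linarith [hexpand, t1, t2, t3, t4]
end
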